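/- Let x̄ be feasible for (P) such that C(x̄) = {0}. Then x̄ is a strict local minimizer of (P), i.e., there is a neighborhood U of x̄ with f(x) > f(x̄) for all x ∈ (X ∩ U) \ {x̄}, and x̄ is M-stationary. -/

import Mathlib

open Filter Topology Metric Set
open scoped RealInnerProductSpace Pointwise

noncomputable section

/-- Euclidean space `ℝ^n`. -/
abbrev Eu (n : ℕ) := EuclideanSpace ℝ (Fin n)

section Cones

variable {H : Type*} [NormedAddCommGroup H] [InnerProductSpace ℝ H]

/-- Tangent (Bouligand) cone to `Ω` at `x` (empty if `x ∉ Ω`). -/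
def tanCone (Ω : Set H) (x : H) : Set H :=
  {d | x ∈ Ω ∧ ∃ (dk : ℕ → H) (tk : ℕ → ℝ),
    Tendsto dk atTop (𝓝 d) ∧ (∀ k, 0 < tk k) ∧ Tendsto tk atTop (𝓝 0) ∧
    ∀ k, x + tk k • dk k ∈ Ω}

/-- Polar cone of a set. -/
def polarCone (C : Set H) : Set H := {y | ∀ x ∈ C, ⟪x, y⟫ ≤ 0}

/-- Regular (Fréchet) normal cone: polar of the tangent cone (empty if `x ∉ Ω`). -/
def regNormal (Ω : Set H) (x : H) : Set H :=
  {η | x ∈ Ω ∧ η ∈ polarCone (tanCone Ω x)}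

/-- Limiting (Mordukhovich) normal cone (empty if `x ∉ Ω`). -/
def limNormal (Ω : Set H) (x : H) : Set H :=
  {η | x ∈ Ω ∧ ∃ (xk ηk : ℕ → H),
    Tendsto xk atTop (𝓝 x) ∧ Tendsto ηk atTop (𝓝 η) ∧
    ∀ k, ηk k ∈ regNormal Ω (xk k)}

/-- Directional limiting normal cone to `Ω` at `x` in direction `d`. -/
def dirLimNormal (Ω : Set H) (x d : H) : Set H :=
  {η | x ∈ Ω ∧ ∃ (dk : ℕ → H) (tk : ℕ → ℝ) (ηk : ℕ → H),
    Tendsto dk atTop (𝓝 d) ∧ (∀ k, 0 < tk k) ∧ Tendsto tk atTop (𝓝 0) ∧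
    Tendsto ηk atTop (𝓝 η) ∧
    ∀ k, ηk k ∈ regNormal Ω (x + tk k • dk k)}

/-- The pair `(ξ, r)` as an element of the ℓ²-product `H ×₂ ℝ`. -/
def pl2 (ξ : H) (r : ℝ) : WithLp 2 (H × ℝ) := (WithLp.equiv 2 (H × ℝ)).symm (ξ, r)

/-- Epigraph of `φ` as a subset of the ℓ²-product `H ×₂ ℝ`. -/
def epigraphSet (φ : H → ℝ) : Set (WithLp 2 (H × ℝ)) :=
  {p | φ ((WithLp.equiv 2 (H × ℝ)) p).1 ≤ ((WithLp.equiv 2 (H × ℝ)) p).2}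

/-- Limiting subdifferential of `φ` at `x`. -/
def limSubdiff (φ : H → ℝ) (x : H) : Set H :=
  {ξ | pl2 ξ (-1) ∈ limNormal (epigraphSet φ) (pl2 x (φ x))}

/-- Directional limiting subdifferential of `φ` at `x` in direction `d`, where `φd`
denotes the directional derivative `φ'(x; d)`. -/
def dirLimSubdiff (φ : H → ℝ) (x d : H) (φd : ℝ) : Set H :=
  {ξ | pl2 ξ (-1) ∈ dirLimNormal (epigraphSet φ) (pl2 x (φ x)) (pl2 d φd)}

/-- Directional neighborhood `B_{ε,δ}(d)`. -/
def dirNbhd (d : H) (ε δ : ℝ) : Set H :=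
  {y | ‖y‖ ≤ ε ∧ ‖‖d‖ • y - ‖y‖ • d‖ ≤ δ * (‖y‖ * ‖d‖)}

end Cones

section Problem

variable {n l : ℕ}

/-- `F' x d` is the directional derivative of `F` at `x` in direction `d`. -/
def IsDirDeriv (F : Eu n → Eu l) (F' : Eu n → Eu n → Eu l) : Prop :=
  ∀ x d : Eu n,
    Tendsto (fun t : ℝ => t⁻¹ • (F (x + t • d) - F x)) (𝓝[>] (0:ℝ)) (𝓝 (F' x d))

/-- Limiting subdifferential of the scalarization `⟨λ, F⟩` at `x`. -/
def scalSubdiff (F : Eu n → Eu l) (lam : Eu l) (x : Eu n) : Set (Eu n) :=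
  limSubdiff (fun y => ⟪lam, F y⟫) x

/-- Directional limiting subdifferential of `⟨λ, F⟩` at `x` in direction `d`. -/
def scalDirSubdiff (F : Eu n → Eu l) (F' : Eu n → Eu n → Eu l) (lam : Eu l)
    (x d : Eu n) : Set (Eu n) :=
  dirLimSubdiff (fun y => ⟪lam, F y⟫) x d ⟪lam, F' x d⟫

/-- Linearization cone. -/
def linCone (F : Eu n → Eu l) (F' : Eu n → Eu n → Eu l) (Γ : Set (Eu l)) (x : Eu n) :
    Set (Eu n) :=
  {d | F' x d ∈ tanCone Γ (F x)}

/-- Explicit critical cone `C(x̄)`. -/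
def critCone (f : Eu n → ℝ) (F : Eu n → Eu l) (F' : Eu n → Eu n → Eu l)
    (Γ : Set (Eu l)) (x : Eu n) : Set (Eu n) :=
  {d | ⟪gradient f x, d⟫ ≤ 0 ∧ d ∈ linCone F F' Γ x}

/-- Implicit critical cone `Ĉ(x̄)`. -/
def implCritCone (f : Eu n → ℝ) (F : Eu n → Eu l) (Γ : Set (Eu l)) (x : Eu n) :
    Set (Eu n) :=
  {d | ⟪gradient f x, d⟫ ≤ 0 ∧ d ∈ tanCone (F ⁻¹' Γ) x}

/-- M-stationarity. -/
def MStat (f : Eu n → ℝ) (F : Eu n → Eu l) (Γ : Set (Eu l)) (x : Eu n) : Prop :=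
  ∃ lam : Eu l, -gradient f x ∈ scalSubdiff F lam x ∧ lam ∈ limNormal Γ (F x)

/-- M-stationarity in direction `d`. -/
def MStatDir (f : Eu n → ℝ) (F : Eu n → Eu l) (F' : Eu n → Eu n → Eu l)
    (Γ : Set (Eu l)) (x d : Eu n) : Prop :=
  ∃ lam : Eu l, -gradient f x ∈ scalDirSubdiff F F' lam x d ∧
    lam ∈ dirLimNormal Γ (F x) (F' x d)

/-- Metric subregularity constraint qualification in direction `d`. -/
def MSCQdir (F : Eu n → Eu l) (Γ : Set (Eu l)) (x d : Eu n) : Prop :=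
  ∃ ε > (0:ℝ), ∃ δ > (0:ℝ), ∃ κ > (0:ℝ), ∀ y : Eu n, y - x ∈ dirNbhd d ε δ →
    infDist y (F ⁻¹' Γ) ≤ κ * infDist (F y) Γ

/-- Metric subregularity constraint qualification. -/
def MSCQ (F : Eu n → Eu l) (Γ : Set (Eu l)) (x : Eu n) : Prop := MSCQdir F Γ x 0

/-- AM-stationary sequence w.r.t. `x`. -/
def AMSeq (f : Eu n → ℝ) (F : Eu n → Eu l) (Γ : Set (Eu l)) (x : Eu n)
    (xk : ℕ → Eu n) (lamk δk : ℕ → Eu l) (εk : ℕ → Eu n) : Prop :=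
  (∀ k, εk k - gradient f (xk k) ∈ scalSubdiff F (lamk k) (xk k)) ∧
  (∀ k, lamk k ∈ limNormal Γ (F (xk k) - δk k)) ∧
  Tendsto xk atTop (𝓝 x) ∧ Tendsto δk atTop (𝓝 0) ∧ Tendsto εk atTop (𝓝 0)

/-- AM-stationarity. -/
def AMStat (f : Eu n → ℝ) (F : Eu n → Eu l) (Γ : Set (Eu l)) (x : Eu n) : Prop :=
  ∃ xk lamk δk εk, AMSeq f F Γ x xk lamk δk εk

/-- AM-stationary sequence w.r.t. `x` in direction `d`. -/
def AMSeqDir (f : Eu n → ℝ) (F : Eu n → Eu l) (Γ : Set (Eu l)) (x : Eu n)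
    (xk : ℕ → Eu n) (lamk δk : ℕ → Eu l) (εk : ℕ → Eu n) (d : Eu n) : Prop :=
  AMSeq f F Γ x xk lamk δk εk ∧
  (∀ k, xk k ≠ x) ∧
  Tendsto (fun k => ‖xk k - x‖⁻¹ • (xk k - x)) atTop (𝓝 d) ∧
  Tendsto (fun k => ‖xk k - x‖⁻¹ • δk k) atTop (𝓝 (0 : Eu l)) ∧
  (∃ θ : ℕ → ℝ, (∀ k, 0 ≤ θ k) ∧ Tendsto θ atTop (𝓝 0) ∧
    ∀ k, ‖‖δk k‖ • lamk k - ‖lamk k‖ • δk k‖ ≤ ‖δk k‖ * ‖lamk k‖ * θ k) ∧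
  (∃ M : ℝ, ∀ k, ‖δk k‖ * ‖lamk k‖ / ‖xk k - x‖ ≤ M)

/-- AM-stationarity in direction `d`. -/
def AMStatDir (f : Eu n → ℝ) (F : Eu n → Eu l) (Γ : Set (Eu l)) (x d : Eu n) : Prop :=
  ∃ xk lamk δk εk, AMSeqDir f F Γ x xk lamk δk εk d

/-- The Minkowski sum `Σ_i |λ_i| ∂(sgn(λ_i) F_i)(x; d)`. -/
def dirSumSet (F : Eu n → Eu l) (F' : Eu n → Eu n → Eu l) (lam : Eu l) (x d : Eu n) :
    Set (Eu n) :=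
  {v | ∃ s : Fin l → Eu n,
    (∀ i, s i ∈ |lam i| • dirLimSubdiff (fun y => Real.sign (lam i) * F y i) x d
        (Real.sign (lam i) * F' x d i)) ∧
    v = ∑ i, s i}

/-- Standing sum-rule assumption. -/
def SumRule (F : Eu n → Eu l) (F' : Eu n → Eu n → Eu l) : Prop :=
  ∀ (x d : Eu n) (lam : Eu l), scalDirSubdiff F F' lam x d = dirSumSet F F' lam x d

end Problem




section Helpers
variable {n l : ℕ}

lemma tendsto_nhdsGT {t : ℕ → ℝ} (h0 : ∀ k, 0 < t k) (h : Tendsto t atTop (𝓝 0)) :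
    Tendsto t atTop (𝓝[>] 0) :=
  tendsto_nhdsWithin_of_tendsto_nhds_of_eventually_within _ h (Eventually.of_forall h0)

lemma norm_sq_expand (a b c : Eu l) :
    ‖a - c‖^2 = ‖a - b‖^2 + 2*⟪b - c, a - b⟫ + ‖b - c‖^2 := by
  have h : a - c = (a - b) + (b - c) := by abel
  have h2 := real_inner_comm (a-b) (b-c)
  rw [h, norm_add_sq_real]
  linarith

lemma lipschitz_quot_tendsto {F : Eu n → Eu l} {F' : Eu n → Eu n → Eu l}
    (hF' : IsDirDeriv F F') {K : NNReal} {x : Eu n} {ρ : ℝ} (hρ : 0 < ρ)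
    (hL : LipschitzOnWith K F (closedBall x ρ)) {u : ℕ → Eu n} {t : ℕ → ℝ} {d : Eu n}
    (ht0 : ∀ k, 0 < t k) (ht : Tendsto t atTop (𝓝 0)) (hu : Tendsto u atTop (𝓝 d)) :
    Tendsto (fun k => (t k)⁻¹ • (F (x + t k • u k) - F x)) atTop (𝓝 (F' x d)) := by
  have ha : Tendsto (fun k => (t k)⁻¹ • (F (x + t k • d) - F x)) atTop (𝓝 (F' x d)) :=
    (hF' x d).comp (tendsto_nhdsGT ht0 ht)
  set B : ℝ := ‖d‖ + 1 with hB
  have hBpos : 0 < B := by positivity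
  have hub : ∀ᶠ k in atTop, ‖u k‖ ≤ B := by
    have := (hu.norm).eventually (eventually_le_nhds (by simp [hB] : ‖d‖ < B))
    exact this
  have htb : ∀ᶠ k in atTop, t k ≤ ρ / B :=
    ht.eventually (eventually_le_nhds (by positivity))
  have hdiff : Tendsto (fun k => (t k)⁻¹ • (F (x + t k • u k) - F (x + t k • d)))
      atTop (𝓝 0) := by
    apply squeeze_zero_norm' (a := fun k => (K:ℝ) * ‖u k - d‖)
    · filter_upwards [hub, htb] with k h1 h2
      have htk := ht0 k
      have hmem1 : x + t k • u k ∈ closedBall x ρ := by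
        rw [mem_closedBall, dist_eq_norm]
        have : ‖x + t k • u k - x‖ = t k * ‖u k‖ := by
          simp [norm_smul, abs_of_pos htk]
        rw [this]
        calc t k * ‖u k‖ ≤ (ρ / B) * B := by
              apply mul_le_mul h2 h1 (norm_nonneg _) (by positivity)
          _ = ρ := by field_simp
      have hmem2 : x + t k • d ∈ closedBall x ρ := by
        rw [mem_closedBall, dist_eq_norm]
        have : ‖x + t k • d - x‖ = t k * ‖d‖ := by
          simp [norm_smul, abs_of_pos htk]
        rw [this]
        calc t k * ‖d‖ ≤ (ρ / B) * B := by
              apply mul_le_mul h2 (by simp [hB]) (norm_nonneg _) (by positivity)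
          _ = ρ := by field_simp
      have hd := hL.dist_le_mul _ hmem1 _ hmem2
      have hdist : dist (x + t k • u k) (x + t k • d) = t k * ‖u k - d‖ := by
        rw [dist_eq_norm]
        have : x + t k • u k - (x + t k • d) = t k • (u k - d) := by
          rw [smul_sub]; abel
        rw [this, norm_smul, Real.norm_eq_abs, abs_of_pos htk]
      rw [norm_smul, Real.norm_eq_abs, abs_of_pos (inv_pos.2 htk), ← dist_eq_norm]
      calc (t k)⁻¹ * dist (F (x + t k • u k)) (F (x + t k • d))
          ≤ (t k)⁻¹ * ((K:ℝ) * (t k * ‖u k - d‖)) := by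
            apply mul_le_mul_of_nonneg_left _ (le_of_lt (inv_pos.2 htk))
            rw [← hdist]; exact hd
        _ = (K:ℝ) * ‖u k - d‖ := by field_simp
    · have : Tendsto (fun k => u k - d) atTop (𝓝 0) := by
        simpa using hu.sub (tendsto_const_nhds (x := d))
      simpa using (this.norm.const_mul (K:ℝ))
  have heq : (fun k => (t k)⁻¹ • (F (x + t k • u k) - F x)) =
      fun k => (t k)⁻¹ • (F (x + t k • u k) - F (x + t k • d)) +
        (t k)⁻¹ • (F (x + t k • d) - F x) := by
    funext k; rw [← smul_add, sub_add_sub_cancel]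
  rw [heq]
  simpa using hdiff.add ha

lemma no_crit {n l : ℕ} {f : Eu n → ℝ} {F : Eu n → Eu l} {F' : Eu n → Eu n → Eu l}
    {Γ : Set (Eu l)} {x : Eu n}
    (hg : HasGradientAt f (gradient f x) x) (hF' : IsDirDeriv F F')
    {K : NNReal} {ρ : ℝ} (hρ : 0 < ρ) (hL : LipschitzOnWith K F (closedBall x ρ))
    (hfeas : F x ∈ Γ) (hC : critCone f F F' Γ x = {0})
    (y : ℕ → Eu n) (p : ℕ → Eu l) (hyne : ∀ k, y k ≠ x) (hyto : Tendsto y atTop (𝓝 x))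
    (hfle : ∀ k, f (y k) ≤ f x) (hp : ∀ k, p k ∈ Γ)
    (hquot : Tendsto (fun k => ‖y k - x‖⁻¹ • (p k - F (y k))) atTop (𝓝 0)) : False := by
  set t : ℕ → ℝ := fun k => ‖y k - x‖ with htdef
  have ht0 : ∀ k, 0 < t k := fun k => norm_sub_pos_iff.2 (hyne k)
  have ht : Tendsto t atTop (𝓝 0) := by
    have h1 : Tendsto (fun k => y k - x) atTop (𝓝 0) := tendsto_sub_nhds_zero_iff.2 hyto
    simpa [htdef] using h1.norm
  set u : ℕ → Eu n := fun k => (t k)⁻¹ • (y k - x) with hudef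
  have hx_t : ∀ k, x + t k • u k = y k := by
    intro k
    rw [hudef]
    simp only []
    rw [smul_inv_smul₀ (ne_of_gt (ht0 k))]
    abel
  have hus : ∀ k, u k ∈ sphere (0 : Eu n) 1 := by
    intro k
    rw [mem_sphere_zero_iff_norm, hudef]
    simp only [norm_smul, Real.norm_eq_abs, abs_of_pos (inv_pos.2 (ht0 k))]
    exact inv_mul_cancel₀ (ne_of_gt (ht0 k))
  obtain ⟨d, hdmem, φ, hφ, huφ⟩ := (isCompact_sphere (0:Eu n) 1).tendsto_subseq hus
  have hd1 : ‖d‖ = 1 := mem_sphere_zero_iff_norm.1 hdmem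
  have hφat : Tendsto φ atTop atTop := hφ.tendsto_atTop
  have htφ : Tendsto (t ∘ φ) atTop (𝓝 0) := ht.comp hφat
  -- part (i): ⟪∇f x, d⟫ ≤ 0
  have hLO := hasGradientAt_iff_isLittleO.1 hg
  have hcomp := hLO.comp_tendsto hyto
  have hq : Tendsto (fun k => ‖f (y k) - f x - ⟪gradient f x, y k - x⟫‖ / ‖y k - x‖)
      atTop (𝓝 0) := hcomp.norm_norm.tendsto_div_nhds_zero
  have hle : ∀ j, ⟪gradient f x, u (φ j)⟫ ≤
      ‖f (y (φ j)) - f x - ⟪gradient f x, y (φ j) - x⟫‖ / ‖y (φ j) - x‖ := by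
    intro j
    set k := φ j
    set e : ℝ := f (y k) - f x - ⟪gradient f x, y k - x⟫ with hedef
    have h1 : ⟪gradient f x, u k⟫ = (t k)⁻¹ * ⟪gradient f x, y k - x⟫ :=
      real_inner_smul_right _ _ _
    have h2 : ⟪gradient f x, y k - x⟫ ≤ |e| := by
      have h3 := hfle k
      have h4 := neg_abs_le e
      rw [hedef] at h4 ⊢
      linarith
    rw [h1, Real.norm_eq_abs, div_eq_inv_mul]
    exact mul_le_mul_of_nonneg_left h2 (le_of_lt (inv_pos.2 (ht0 k)))
  have hgi : Tendsto (fun j => ⟪gradient f x, u (φ j)⟫) atTop (𝓝 ⟪gradient f x, d⟫) := by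
    exact (tendsto_const_nhds (x := gradient f x)).inner huφ
  have hi : ⟪gradient f x, d⟫ ≤ 0 :=
    le_of_tendsto_of_tendsto' hgi (hq.comp hφat) hle
  -- part (ii): F' x d ∈ tanCone Γ (F x)
  set gk : ℕ → Eu l := fun j => (t (φ j))⁻¹ • (p (φ j) - F x) with hgkdef
  have hgk : Tendsto gk atTop (𝓝 (F' x d)) := by
    have h2 : Tendsto (fun j => (t (φ j))⁻¹ • (F (x + t (φ j) • u (φ j)) - F x)) atTop
        (𝓝 (F' x d)) :=
      lipschitz_quot_tendsto hF' hρ hL (fun j => ht0 (φ j)) htφ huφ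
    have h3 : Tendsto (fun j => (t (φ j))⁻¹ • (p (φ j) - F (y (φ j)))) atTop (𝓝 0) :=
      hquot.comp hφat
    have heq : gk = fun j => (t (φ j))⁻¹ • (p (φ j) - F (y (φ j))) +
        (t (φ j))⁻¹ • (F (x + t (φ j) • u (φ j)) - F x) := by
      funext j
      rw [hgkdef]
      simp only [hx_t (φ j)]
      rw [← smul_add, sub_add_sub_cancel]
    rw [heq]
    simpa using h3.add h2
  have hii : F' x d ∈ tanCone Γ (F x) := by
    refine ⟨hfeas, gk, t ∘ φ, hgk, fun j => ht0 (φ j), htφ, fun j => ?_⟩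
    have h5 : F x + (t ∘ φ) j • gk j = p (φ j) := by
      show F x + t (φ j) • ((t (φ j))⁻¹ • (p (φ j) - F x)) = p (φ j)
      rw [smul_inv_smul₀ (ne_of_gt (ht0 (φ j)))]
      abel
    rw [h5]
    exact hp (φ j)
  have hmem : d ∈ critCone f F F' Γ x := ⟨hi, hii⟩
  rw [hC] at hmem
  simp only [mem_singleton_iff] at hmem
  rw [hmem] at hd1
  simp at hd1

lemma wlp_tendsto_fst {n : ℕ} {f : ℕ → WithLp 2 (Eu n × ℝ)} {v : WithLp 2 (Eu n × ℝ)}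
    (h : Tendsto f atTop (𝓝 v)) : Tendsto (fun k => (f k).fst) atTop (𝓝 v.fst) :=
  ((WithLp.continuous_fst 2 (Eu n) ℝ).tendsto v).comp h

lemma wlp_tendsto_snd {n : ℕ} {f : ℕ → WithLp 2 (Eu n × ℝ)} {v : WithLp 2 (Eu n × ℝ)}
    (h : Tendsto f atTop (𝓝 v)) : Tendsto (fun k => (f k).snd) atTop (𝓝 v.snd) :=
  ((WithLp.continuous_snd 2 (Eu n) ℝ).tendsto v).comp h

lemma pl2_tendsto {n : ℕ} {a : ℕ → Eu n} {b : ℕ → ℝ} {a₀ : Eu n} {b₀ : ℝ}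
    (ha : Tendsto a atTop (𝓝 a₀)) (hb : Tendsto b atTop (𝓝 b₀)) :
    Tendsto (fun k => pl2 (a k) (b k)) atTop (𝓝 (pl2 a₀ b₀)) :=
  ((WithLp.prod_continuous_toLp 2 (Eu n) ℝ).tendsto (a₀, b₀)).comp (ha.prodMk_nhds hb)

lemma prox_regNormal {n : ℕ} {φ : Eu n → ℝ} {w ξ : Eu n} {a r : ℝ} (hr : 0 < r)
    (h : ∀ y : Eu n, ‖y - w‖ ≤ r → φ w + ⟪ξ, y - w⟫ - a * ‖y - w‖^2 ≤ φ y) :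
    pl2 ξ (-1) ∈ regNormal (epigraphSet φ) (pl2 w (φ w)) := by
  refine ⟨le_refl (φ w), ?_⟩
  intro v hv
  obtain ⟨-, dk, tk, hdk, htk0, htk, hmem⟩ := hv
  have hdk1 : Tendsto (fun k => (dk k).fst) atTop (𝓝 v.fst) := wlp_tendsto_fst hdk
  have hdk2 : Tendsto (fun k => (dk k).snd) atTop (𝓝 v.snd) := wlp_tendsto_snd hdk
  have hsm : Tendsto (fun k => tk k * ‖(dk k).fst‖) atTop (𝓝 0) := by
    have := htk.mul hdk1.norm
    simpa using this
  have hev : ∀ᶠ k in atTop, tk k * ‖(dk k).fst‖ ≤ r :=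
    hsm.eventually (eventually_le_nhds hr)
  have key : ∀ᶠ k in atTop,
      ⟪ξ, (dk k).fst⟫ - a * (tk k * ‖(dk k).fst‖^2) ≤ (dk k).snd := by
    filter_upwards [hev] with k hk
    have hm : φ (w + tk k • (dk k).fst) ≤ φ w + tk k * (dk k).snd := hmem k
    have hnorm : ‖(w + tk k • (dk k).fst) - w‖ = tk k * ‖(dk k).fst‖ := by
      rw [add_sub_cancel_left, norm_smul, Real.norm_eq_abs, abs_of_pos (htk0 k)]
    have hball : ‖(w + tk k • (dk k).fst) - w‖ ≤ r := by rw [hnorm]; exact hk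
    have hprox := h _ hball
    rw [hnorm, add_sub_cancel_left, real_inner_smul_right] at hprox
    have hmain : tk k * ⟪ξ, (dk k).fst⟫ - a * ((tk k * ‖(dk k).fst‖)^2) ≤ tk k * (dk k).snd := by
      linarith
    have htkk := htk0 k
    nlinarith [htkk, sq_nonneg (tk k)]
  have hlhs : Tendsto (fun k => ⟪ξ, (dk k).fst⟫ - a * (tk k * ‖(dk k).fst‖^2)) atTop
      (𝓝 ⟪ξ, v.fst⟫) := by
    have h1 : Tendsto (fun k => ⟪ξ, (dk k).fst⟫) atTop (𝓝 ⟪ξ, v.fst⟫) :=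
      (tendsto_const_nhds (x := ξ)).inner hdk1
    have h2 : Tendsto (fun k => a * (tk k * ‖(dk k).fst‖^2)) atTop (𝓝 0) := by
      have := htk.mul ((hdk1.norm).pow 2)
      simpa using (this.const_mul a)
    simpa using h1.sub h2
  have hfin : ⟪ξ, v.fst⟫ ≤ v.snd := le_of_tendsto_of_tendsto hlhs hdk2 key
  have hpi : ⟪v, pl2 ξ (-1)⟫ ≤ 0 := by
    simp only [WithLp.prod_inner_apply, WithLp.ofLp_fst, WithLp.ofLp_snd]
    have e1 : (pl2 ξ (-1 : ℝ)).fst = ξ := rfl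
    have e2 : (pl2 ξ (-1 : ℝ)).snd = (-1 : ℝ) := rfl
    rw [e1, e2]
    have e3 : ⟪v.snd, (-1 : ℝ)⟫ = v.snd * (-1) := by
      simp [real_inner_comm]
    rw [e3]
    have := real_inner_comm v.fst ξ
    linarith
  exact hpi

lemma limSubdiff_of_seq {n : ℕ} {φ : Eu n → ℝ} (hφ : Continuous φ) {x ξ : Eu n}
    (w ξk : ℕ → Eu n) (hw : Tendsto w atTop (𝓝 x)) (hξ : Tendsto ξk atTop (𝓝 ξ))
    (hreg : ∀ k, pl2 (ξk k) (-1) ∈ regNormal (epigraphSet φ) (pl2 (w k) (φ (w k)))) :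
    ξ ∈ limSubdiff φ x := by
  refine ⟨le_refl (φ x), fun k => pl2 (w k) (φ (w k)), fun k => pl2 (ξk k) (-1), ?_, ?_, hreg⟩
  · exact pl2_tendsto hw ((hφ.tendsto x).comp hw)
  · exact pl2_tendsto hξ tendsto_const_nhds


lemma KI_arith {fy fY Ebig u P P' e ny nY φy φY Q G X2 s2 σs εs Bs aas2 cs2 ξin : ℝ}
    (h4 : fY + e + nY ≤ fy + Ebig + ny)
    (expand1 : Ebig = u + P' + e)
    (hPP : P = P')
    (hlin : φy - φY = P + Q)
    (hpert : -εs ≤ Q)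
    (hquad : u ≤ cs2)
    (haaq : aas2 = cs2 + s2)
    (hxexp : ny = s2 + 2*X2 + nY)
    (hfexp : fy ≤ fY + G + σs)
    (hξeq : ξin = -G - 2*X2)
    (hBs : Bs = εs + σs) :
    φY + ξin - Bs - aas2 ≤ φy := by linarith

lemma hwlt_arith {φw φY ξw Br aar2 AAr2 : ℝ} (h2 : φY + ξw - Br - aar2 ≤ φw)
    (h1 : φw - ξw + AAr2 ≤ φY) (h3 : AAr2 - aar2 = 2*Br) (h4 : 0 < Br) : False := by
  linarith

lemma prox_arith {φy φw ξyY ξwY ξyw ξ'yw AAyY2 AAyw2 AAwY2 tw : ℝ}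
    (h1 : φw - ξwY + AAwY2 ≤ φy - ξyY + AAyY2) (hi1 : ξyY - ξwY = ξyw)
    (hi2 : AAyY2 = AAyw2 + tw + AAwY2) (hi3 : ξ'yw = ξyw - tw) :
    φw + ξ'yw - AAyw2 ≤ φy := by linarith

lemma corr_arith {v t q c bb : ℝ} (h2 : v ≤ t) (h3 : t = 2*q + bb) (h4 : q ≤ c) :
    v ≤ 2*(c) + bb := by linarith

end Helpers

set_option maxHeartbeats 2000000 in
/-- A feasible point with trivial explicit critical cone is a strict local minimizer
which is M-stationary. -/
theorem stmt16 {n l : ℕ}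
    (f : Eu n → ℝ) (hf : ContDiff ℝ 1 f)
    (F : Eu n → Eu l) (F' : Eu n → Eu n → Eu l)
    (hLip : LocallyLipschitz F) (hF' : IsDirDeriv F F')
    (Γ : Set (Eu l)) (hΓne : Γ.Nonempty) (hΓcl : IsClosed Γ)
    (x : Eu n) (hfeas : F x ∈ Γ)
    (hC : critCone f F F' Γ x = {0}) :
    (∃ U ∈ 𝓝 x, ∀ y ∈ (F ⁻¹' Γ) ∩ U, y ≠ x → f x < f y) ∧
    MStat f F Γ x := by
  classical
  have hdf : Differentiable ℝ f := hf.differentiable one_ne_zero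
  have hgc : Continuous (gradient f) :=
    ((InnerProductSpace.toDual ℝ (Eu n)).symm.continuous).comp (hf.continuous_fderiv one_ne_zero)
  have hFc : Continuous F := hLip.continuous
  obtain ⟨K, s, hs, hLs⟩ := hLip x
  obtain ⟨ρ₀, hρ₀, hball⟩ := Metric.nhds_basis_closedBall.mem_iff.1 hs
  have hL : LipschitzOnWith K F (closedBall x ρ₀) := hLs.mono hball
  -- Part 1 : strict local minimality
  have part1 : ∃ ρ, 0 < ρ ∧ ρ ≤ ρ₀ ∧
      ∀ y, y ∈ F ⁻¹' Γ → ‖y - x‖ ≤ ρ → y ≠ x → f x < f y := by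
    by_contra hcon
    push_neg at hcon
    have hsel : ∀ k : ℕ, ∃ y, y ∈ F ⁻¹' Γ ∧ ‖y - x‖ ≤ min ρ₀ (1/((k:ℝ)+1)) ∧
        y ≠ x ∧ f y ≤ f x := by
      intro k
      obtain ⟨y, h1, h2, h3, h4⟩ := hcon (min ρ₀ (1/((k:ℝ)+1)))
        (lt_min hρ₀ (by positivity)) (min_le_left _ _)
      exact ⟨y, h1, h2, h3, h4⟩
    choose y hy1 hy2 hy3 hy4 using hsel
    have hyto : Tendsto y atTop (𝓝 x) := by
      rw [tendsto_iff_dist_tendsto_zero]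
      refine squeeze_zero (fun k => dist_nonneg) (fun k => ?_)
        tendsto_one_div_add_atTop_nhds_zero_nat
      rw [dist_eq_norm]
      exact le_trans (hy2 k) (min_le_right _ _)
    exact no_crit ((hdf x).hasGradientAt) hF' hρ₀ hL hfeas hC y (fun k => F (y k))
      hy3 hyto hy4 (fun k => hy1 k)
      (by simpa using (tendsto_const_nhds (x := (0 : Eu l)) (f := atTop (α := ℕ))))
  obtain ⟨ρ₁, hρ₁, hρ₁ρ₀, hmin⟩ := part1
  have hLρ : LipschitzOnWith K F (closedBall x ρ₁) :=
    hL.mono (closedBall_subset_closedBall hρ₁ρ₀)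
  have bullet1 : ∃ U ∈ 𝓝 x, ∀ y ∈ (F ⁻¹' Γ) ∩ U, y ≠ x → f x < f y := by
    refine ⟨closedBall x ρ₁, closedBall_mem_nhds x hρ₁, fun y hy hne => ?_⟩
    exact hmin y hy.1 (by rw [← dist_eq_norm]; exact hy.2) hne
  refine ⟨bullet1, ?_⟩
  -- Part 2 : M-stationarity via penalization
  obtain ⟨C₁, hC₁⟩ := (isCompact_closedBall x ρ₁).exists_bound_of_continuousOn
    ((hf.continuous_fderiv one_ne_zero).continuousOn)
  have hflip : ∀ y ∈ closedBall x ρ₁, ‖f y - f x‖ ≤ C₁ * ‖y - x‖ := fun y hy =>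
    Convex.norm_image_sub_le_of_norm_fderiv_le (fun z _ => (hdf z))
      hC₁ (convex_closedBall x ρ₁) (mem_closedBall_self hρ₁.le) hy
  have hC₁0 : 0 ≤ C₁ := le_trans (norm_nonneg _) (hC₁ x (mem_closedBall_self hρ₁.le))
  set S : Set (Eu n × Eu l) := closedBall x ρ₁ ×ˢ (Γ ∩ closedBall (F x) 1) with hSdef
  have hScomp : IsCompact S :=
    (isCompact_closedBall x ρ₁).prod ((isCompact_closedBall (F x) 1).inter_left hΓcl)
  have hSne : S.Nonempty :=
    ⟨(x, F x), mem_closedBall_self hρ₁.le, hfeas, mem_closedBall_self zero_le_one⟩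
  have hsel2 : ∀ k : ℕ, ∃ y z : _, (y, z) ∈ S ∧ ∀ y' z', (y', z') ∈ S →
      f y + ((k:ℝ)+1)/2 * ‖F y - z‖^2 + ‖y - x‖^2 ≤
      f y' + ((k:ℝ)+1)/2 * ‖F y' - z'‖^2 + ‖y' - x‖^2 := by
    intro k
    have hΦc : Continuous (fun q : Eu n × Eu l =>
        f q.1 + ((k:ℝ)+1)/2 * ‖F q.1 - q.2‖^2 + ‖q.1 - x‖^2) := by
      refine Continuous.add (Continuous.add ?_ ?_) ?_
      · exact hf.continuous.comp continuous_fst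
      · exact continuous_const.mul
          ((((hFc.comp continuous_fst).sub continuous_snd).norm).pow 2)
      · exact ((continuous_fst.sub continuous_const).norm).pow 2
    obtain ⟨q, hqS, hqmin⟩ := hScomp.exists_isMinOn hSne hΦc.continuousOn
    exact ⟨q.1, q.2, by simpa using hqS, fun y' z' hq' => hqmin hq'⟩
  choose yk zk hyzS hyzmin using hsel2
  have hyB : ∀ k, yk k ∈ closedBall x ρ₁ := fun k => (hyzS k).1
  have hzΓ : ∀ k, zk k ∈ Γ := fun k => (hyzS k).2.1
  have hzB : ∀ k, zk k ∈ closedBall (F x) 1 := fun k => (hyzS k).2.2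
  have hm1 : ∀ k, f (yk k) + ((k:ℝ)+1)/2 * ‖F (yk k) - zk k‖^2 + ‖yk k - x‖^2 ≤ f x := by
    intro k
    have h := hyzmin k x (F x) ⟨mem_closedBall_self hρ₁.le, hfeas,
      mem_closedBall_self zero_le_one⟩
    simpa using h
  have hfle_all : ∀ k, f (yk k) ≤ f x := by
    intro k
    have h := hm1 k
    have h1 : 0 ≤ ((k:ℝ)+1)/2 * ‖F (yk k) - zk k‖^2 := by positivity
    have h2 : 0 ≤ ‖yk k - x‖^2 := by positivity
    linarith
  set lam : ℕ → Eu l := fun k => ((k:ℝ)+1) • (F (yk k) - zk k) with hlamdef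
  have hm5 : ∀ k, yk k = x → lam k = 0 := by
    intro k hk
    have h := hm1 k
    rw [hk] at h
    have h2 : ((k:ℝ)+1)/2 * ‖F x - zk k‖^2 ≤ 0 := by
      simp only [sub_self, norm_zero] at h
      nlinarith [sq_nonneg ‖F x - zk k‖]
    have h4 : ‖F x - zk k‖^2 ≤ 0 := by
      have hpos : (0:ℝ) < ((k:ℝ)+1)/2 := by positivity
      nlinarith
    have h5 : F x - zk k = 0 := by
      have h6 : ‖F x - zk k‖^2 = 0 := le_antisymm h4 (sq_nonneg _)
      have h7 : ‖F x - zk k‖ = 0 := by nlinarith [norm_nonneg (F x - zk k)]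
      exact norm_eq_zero.1 h7
    rw [hlamdef]
    show ((k:ℝ)+1) • (F (yk k) - zk k) = 0
    rw [hk, h5, smul_zero]
  have hm3 : ∀ k, ‖zk k - F x‖ < 1 → lam k ∈ regNormal Γ (zk k) := by
    intro k hzk1
    refine ⟨hzΓ k, ?_⟩
    intro v hv
    obtain ⟨-, dj, tj, hdj, htj0, htj, hmemj⟩ := hv
    have hsm : Tendsto (fun j => tj j * ‖dj j‖) atTop (𝓝 0) := by
      simpa using htj.mul hdj.norm
    have hev : ∀ᶠ j in atTop, tj j * ‖dj j‖ ≤ 1 - ‖zk k - F x‖ :=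
      hsm.eventually (eventually_le_nhds (by linarith))
    have key : ∀ᶠ j in atTop, ⟪F (yk k) - zk k, dj j⟫ ≤ tj j * ‖dj j‖^2 / 2 := by
      filter_upwards [hev] with j hj
      have hmem2 : zk k + tj j • dj j ∈ closedBall (F x) 1 := by
        rw [mem_closedBall, dist_eq_norm]
        calc ‖zk k + tj j • dj j - F x‖ ≤ ‖zk k - F x‖ + ‖tj j • dj j‖ := by
              rw [show zk k + tj j • dj j - F x = (zk k - F x) + tj j • dj j by abel]
              exact norm_add_le _ _
          _ ≤ ‖zk k - F x‖ + tj j * ‖dj j‖ := by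
              rw [norm_smul, Real.norm_eq_abs, abs_of_pos (htj0 j)]
          _ ≤ 1 := by linarith
      have h := hyzmin k (yk k) (zk k + tj j • dj j) ⟨hyB k, hmemj j, hmem2⟩
      have hre : F (yk k) - (zk k + tj j • dj j) = F (yk k) - zk k - tj j • dj j := by
        abel
      rw [hre] at h
      have h6 : ‖F (yk k) - zk k‖^2 ≤ ‖F (yk k) - zk k - tj j • dj j‖^2 := by
        have hκ : (0:ℝ) < ((k:ℝ)+1)/2 := by positivity
        nlinarith
      have h7 := norm_sub_sq_real (F (yk k) - zk k) (tj j • dj j)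
      have h8 : ⟪F (yk k) - zk k, tj j • dj j⟫ = tj j * ⟪F (yk k) - zk k, dj j⟫ :=
        real_inner_smul_right _ _ _
      have h9 : ‖tj j • dj j‖^2 = tj j^2 * ‖dj j‖^2 := by
        rw [norm_smul, Real.norm_eq_abs, mul_pow, sq_abs]
      have h10 : 2 * tj j * ⟪F (yk k) - zk k, dj j⟫ ≤ tj j^2 * ‖dj j‖^2 := by
        rw [h8, h9] at h7
        linarith
      have h2t : (0:ℝ) < 2 * tj j := by linarith [htj0 j]
      refine (mul_le_mul_iff_right₀ h2t).1 ?_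
      have he : 2 * tj j * (tj j * ‖dj j‖^2 / 2) = tj j^2 * ‖dj j‖^2 := by ring
      linarith
    have hlim1 : Tendsto (fun j => ⟪F (yk k) - zk k, dj j⟫) atTop
        (𝓝 ⟪F (yk k) - zk k, v⟫) := (tendsto_const_nhds (x := F (yk k) - zk k)).inner hdj
    have hlim2 : Tendsto (fun j => tj j * ‖dj j‖^2 / 2) atTop (𝓝 0) := by
      have := (htj.mul ((hdj.norm).pow 2)).div_const (2:ℝ)
      simpa using this
    have hfv : ⟪F (yk k) - zk k, v⟫ ≤ 0 := le_of_tendsto_of_tendsto hlim1 hlim2 key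
    have heq : ⟪v, lam k⟫ = ((k:ℝ)+1) * ⟪F (yk k) - zk k, v⟫ := by
      rw [hlamdef]
      show ⟪v, ((k:ℝ)+1) • (F (yk k) - zk k)⟫ = _
      rw [real_inner_smul_right, real_inner_comm]
    rw [heq]
    have hκ : (0:ℝ) ≤ (k:ℝ)+1 := by positivity
    exact mul_nonpos_of_nonneg_of_nonpos hκ hfv
  -- convergence of the penalized minimizers
  have hyz : Tendsto (fun k => (yk k, zk k)) atTop (𝓝 (x, F x)) := by
    by_contra hcont
    rw [Metric.tendsto_atTop] at hcont
    push_neg at hcont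
    obtain ⟨ε, hε, hfar⟩ := hcont
    have hfreq : ∃ᶠ k in atTop, ε ≤ dist ((yk k, zk k)) (x, F x) := by
      rw [frequently_atTop]
      intro N
      obtain ⟨k, hk1, hk2⟩ := hfar N
      exact ⟨k, hk1, hk2⟩
    obtain ⟨φ, hφ, hφd⟩ := Filter.extraction_of_frequently_atTop hfreq
    obtain ⟨q, hqS, ψ, hψ, hqlim⟩ := hScomp.tendsto_subseq
      (x := (fun k => (yk k, zk k)) ∘ φ) (fun j => hyzS (φ j))
    set m : ℕ → ℕ := fun j => φ (ψ j) with hmdef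
    have hmst : StrictMono m := hφ.comp hψ
    have hqlim' : Tendsto (fun j => (yk (m j), zk (m j))) atTop (𝓝 q) := hqlim
    have hy1lim : Tendsto (fun j => yk (m j)) atTop (𝓝 q.1) :=
      (continuous_fst.tendsto q).comp hqlim'
    have hy2lim : Tendsto (fun j => zk (m j)) atTop (𝓝 q.2) :=
      (continuous_snd.tendsto q).comp hqlim'
    have hfxy : ∀ k, f x - f (yk k) ≤ C₁ * ρ₁ := by
      intro k
      have h3 := hflip _ (hyB k)
      have h4 : ‖yk k - x‖ ≤ ρ₁ := by rw [← dist_eq_norm]; exact hyB k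
      have h5 : C₁ * ‖yk k - x‖ ≤ C₁ * ρ₁ := mul_le_mul_of_nonneg_left h4 hC₁0
      have h6 : f x - f (yk k) ≤ |f (yk k) - f x| := by
        rw [abs_sub_comm]; exact le_abs_self _
      rw [Real.norm_eq_abs] at h3
      linarith
    have hFq : F q.1 = q.2 := by
      have hb : ∀ j, ‖F (yk (m j)) - zk (m j)‖^2 ≤ 2*(C₁*ρ₁)/((j:ℝ)+1) := by
        intro j
        have h := hm1 (m j)
        have h2 := hfxy (m j)
        have h7 : ((m j:ℝ)+1)/2 * ‖F (yk (m j)) - zk (m j)‖^2 ≤ C₁ * ρ₁ := by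
          have h8 : 0 ≤ ‖yk (m j) - x‖^2 := by positivity
          linarith
        have h9 : ((j:ℝ)+1) ≤ ((m j:ℝ)+1) := by
          have : (j:ℝ) ≤ (m j : ℝ) := by exact_mod_cast hmst.le_apply
          linarith
        have h10 : (0:ℝ) < (j:ℝ)+1 := by positivity
        have h11 : (0:ℝ) < (m j:ℝ)+1 := by positivity
        rw [le_div_iff₀ h10]
        nlinarith [sq_nonneg ‖F (yk (m j)) - zk (m j)‖]
      have hz0 : Tendsto (fun j => ‖F (yk (m j)) - zk (m j)‖^2) atTop (𝓝 0) := by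
        refine squeeze_zero (fun j => by positivity) hb ?_
        have h1 : Tendsto (fun j : ℕ => 1/((j:ℝ)+1)) atTop (𝓝 0) :=
          tendsto_one_div_add_atTop_nhds_zero_nat
        have h2 := h1.const_mul (2*(C₁*ρ₁))
        simp only [mul_zero] at h2
        convert h2 using 2 with j
        ring
      have hz1 : Tendsto (fun j => ‖F (yk (m j)) - zk (m j)‖^2) atTop
          (𝓝 (‖F q.1 - q.2‖^2)) := by
        have h1 := ((hFc.tendsto q.1).comp hy1lim).sub hy2lim
        exact (h1.norm).pow 2
      have h12 := tendsto_nhds_unique hz1 hz0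
      have h13 : ‖F q.1 - q.2‖ = 0 := by nlinarith [norm_nonneg (F q.1 - q.2)]
      exact sub_eq_zero.1 (norm_eq_zero.1 h13)
    have hfq1 : f q.1 + ‖q.1 - x‖^2 ≤ f x := by
      have hineq : ∀ j, f (yk (m j)) + ‖yk (m j) - x‖^2 ≤ f x := by
        intro j
        have h := hm1 (m j)
        have h1 : 0 ≤ ((m j:ℝ)+1)/2 * ‖F (yk (m j)) - zk (m j)‖^2 := by positivity
        linarith
      have hlimL : Tendsto (fun j => f (yk (m j)) + ‖yk (m j) - x‖^2) atTop
          (𝓝 (f q.1 + ‖q.1 - x‖^2)) := by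
        have h1 := (hf.continuous.tendsto q.1).comp hy1lim
        have h2 : Tendsto (fun j => ‖yk (m j) - x‖^2) atTop (𝓝 (‖q.1 - x‖^2)) :=
          ((hy1lim.sub (tendsto_const_nhds (x := x))).norm).pow 2
        exact h1.add h2
      exact le_of_tendsto_of_tendsto hlimL tendsto_const_nhds
        (Eventually.of_forall hineq)
    have hq1ball : q.1 ∈ closedBall x ρ₁ := hqS.1
    have hq1feas : q.1 ∈ F ⁻¹' Γ := by
      rw [mem_preimage, hFq]
      exact hqS.2.1
    have hq1x : q.1 = x := by
      by_contra hne
      have := hmin q.1 hq1feas (by rw [← dist_eq_norm]; exact hq1ball) hne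
      nlinarith [sq_nonneg ‖q.1 - x‖]
    have hq2 : q.2 = F x := by rw [← hFq, hq1x]
    have hqeq : q = (x, F x) := Prod.ext hq1x hq2
    have hdd : Tendsto (fun j => dist ((yk (m j), zk (m j))) (x, F x)) atTop (𝓝 0) := by
      rw [← hqeq]
      exact tendsto_iff_dist_tendsto_zero.1 hqlim'
    have hge : (0:ℝ) ≥ ε := ge_of_tendsto hdd
      (Eventually.of_forall (fun j => hφd (ψ j)))
    linarith
  have hyto : Tendsto yk atTop (𝓝 x) := (continuous_fst.tendsto _).comp hyz
  have hzto : Tendsto zk atTop (𝓝 (F x)) := (continuous_snd.tendsto _).comp hyz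
  -- dichotomy on the multipliers
  by_cases hbd : ∃ C : ℝ, ∃ᶠ k in atTop, ‖lam k‖ ≤ C
  · -- Case A : bounded subsequence of multipliers
    obtain ⟨C, hfreq⟩ := hbd
    obtain ⟨φ₁, hφ₁, hφ₁C⟩ := Filter.extraction_of_frequently_atTop hfreq
    have hmemB : ∀ j, lam (φ₁ j) ∈ closedBall (0 : Eu l) C := by
      intro j
      rw [mem_closedBall, dist_zero_right]
      exact hφ₁C j
    obtain ⟨lamb, -, φ₂, hφ₂, hlamlim⟩ :=
      (isCompact_closedBall (0:Eu l) C).tendsto_subseq hmemB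
    set m0 : ℕ → ℕ := fun j => φ₁ (φ₂ j) with hm0def
    have hm0 : StrictMono m0 := hφ₁.comp hφ₂
    have hl0 : Tendsto (fun j => lam (m0 j)) atTop (𝓝 lamb) := hlamlim
    have hy0 : Tendsto (fun j => yk (m0 j)) atTop (𝓝 x) := hyto.comp hm0.tendsto_atTop
    have hz0 : Tendsto (fun j => zk (m0 j)) atTop (𝓝 (F x)) := hzto.comp hm0.tendsto_atTop
    have hev : ∀ᶠ j in atTop, ‖zk (m0 j) - F x‖ < 1 ∧ ‖yk (m0 j) - x‖ ≤ ρ₁/2 := by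
      have h1 : ∀ᶠ j in atTop, ‖zk (m0 j) - F x‖ < 1 := by
        have h2 := (tendsto_sub_nhds_zero_iff.2 hz0).norm
        simp only [norm_zero] at h2
        exact h2.eventually (eventually_lt_nhds one_pos)
      have h3 : ∀ᶠ j in atTop, ‖yk (m0 j) - x‖ ≤ ρ₁/2 := by
        have h2 := (tendsto_sub_nhds_zero_iff.2 hy0).norm
        simp only [norm_zero] at h2
        exact h2.eventually (eventually_le_nhds (by positivity))
      exact h1.and h3
    obtain ⟨N, hN⟩ := eventually_atTop.1 hev
    set M : ℕ → ℕ := fun j => m0 (j + N) with hMdef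
    have hMadd : Tendsto (fun j : ℕ => j + N) atTop atTop :=
      tendsto_add_atTop_nat N
    have hyM : Tendsto (fun j => yk (M j)) atTop (𝓝 x) := hy0.comp hMadd
    have hzM : Tendsto (fun j => zk (M j)) atTop (𝓝 (F x)) := hz0.comp hMadd
    have hlM : Tendsto (fun j => lam (M j)) atTop (𝓝 lamb) := hl0.comp hMadd
    have hE1 : ∀ j, ‖zk (M j) - F x‖ < 1 := fun j => (hN (j+N) (Nat.le_add_left N j)).1
    have hE2 : ∀ j, ‖yk (M j) - x‖ ≤ ρ₁/2 := fun j => (hN (j+N) (Nat.le_add_left N j)).2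
    have hlimN : lamb ∈ limNormal Γ (F x) :=
      ⟨hfeas, fun j => zk (M j), fun j => lam (M j), hzM, hlM,
        fun j => hm3 (M j) (hE1 j)⟩
    set φb : Eu n → ℝ := fun y => ⟪lamb, F y⟫ with hφbdef
    have hφbc : Continuous φb := continuous_const.inner hFc
    set ξ : ℕ → Eu n := fun j => -gradient f (yk (M j)) - (2:ℝ) • (yk (M j) - x)
      with hξdef
    set εL : ℕ → ℝ := fun j => (K:ℝ) * ‖lamb - lam (M j)‖ with hεdef
    set σ : ℕ → ℝ := fun j => 1/((j:ℝ)+1) with hσdef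
    set B : ℕ → ℝ := fun j => εL j + σ j with hBdef
    set aa : ℕ → ℝ := fun j => ((M j:ℝ)+1) * (K:ℝ)^2/2 + 1 with haadef
    have hσ0 : ∀ j, 0 < σ j := fun j => by simp only [hσdef]; positivity
    have hεL0 : ∀ j, 0 ≤ εL j := fun j =>
      mul_nonneg (by positivity) (norm_nonneg _)
    have hB0 : ∀ j, 0 < B j := fun j => by
      have := hεL0 j; have := hσ0 j
      simp only [hBdef]; linarith
    have haa1 : ∀ j, 1 ≤ aa j := fun j => by
      simp only [haadef]
      have : (0:ℝ) ≤ ((M j:ℝ)+1) * (K:ℝ)^2/2 := by positivity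
      linarith
    have haa0 : ∀ j, 0 < aa j := fun j => lt_of_lt_of_le one_pos (haa1 j)
    -- radii
    have hrsel : ∀ j : ℕ, ∃ r : ℝ, 0 < r ∧ r ≤ ρ₁/2 ∧ r ≤ 1/(((j:ℝ)+1)*(aa j)) ∧
        ∀ y, ‖y - yk (M j)‖ ≤ r →
          |f y - f (yk (M j)) - ⟪gradient f (yk (M j)), y - yk (M j)⟫| ≤
            σ j * ‖y - yk (M j)‖ := by
      intro j
      have hlo := hasGradientAt_iff_isLittleO.1 ((hdf (yk (M j))).hasGradientAt)
      rw [Asymptotics.isLittleO_iff] at hlo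
      have hev2 := hlo (hσ0 j)
      rw [Metric.eventually_nhds_iff] at hev2
      obtain ⟨δ, hδ, hδp⟩ := hev2
      have hbpos : (0:ℝ) < 1/(((j:ℝ)+1)*(aa j)) := by
        have := haa0 j
        positivity
      refine ⟨min (δ/2) (min (ρ₁/2) (1/(((j:ℝ)+1)*(aa j)))), ?_, ?_, ?_, ?_⟩
      · exact lt_min (by linarith) (lt_min (by linarith) hbpos)
      · exact le_trans (min_le_right _ _) (min_le_left _ _)
      · exact le_trans (min_le_right _ _) (min_le_right _ _)
      · intro y hy
        have hd : dist y (yk (M j)) < δ := by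
          rw [dist_eq_norm]
          calc ‖y - yk (M j)‖ ≤ min (δ/2) _ := hy
            _ ≤ δ/2 := min_le_left _ _
            _ < δ := by linarith
        have h9 := hδp hd
        rw [Real.norm_eq_abs] at h9
        exact h9
    choose r hr0 hrρ hrb hrf using hrsel
    -- key inequality
    have KI : ∀ j : ℕ, ∀ y : Eu n, ‖y - yk (M j)‖ ≤ r j →
        φb (yk (M j)) + ⟪ξ j, y - yk (M j)⟫ - B j * ‖y - yk (M j)‖
          - aa j * ‖y - yk (M j)‖^2 ≤ φb y := by
      intro j y hyr
      have hyball : y ∈ closedBall x ρ₁ := by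
        rw [mem_closedBall, dist_eq_norm]
        have h1 : y - x = (y - yk (M j)) + (yk (M j) - x) := by abel
        calc ‖y - x‖ ≤ ‖y - yk (M j)‖ + ‖yk (M j) - x‖ := by
              rw [h1]; exact norm_add_le _ _
          _ ≤ r j + ρ₁/2 := add_le_add hyr (hE2 j)
          _ ≤ ρ₁/2 + ρ₁/2 := by linarith [hrρ j]
          _ = ρ₁ := by ring
      have hYball : yk (M j) ∈ closedBall x ρ₁ := hyB (M j)
      have h4 := hyzmin (M j) y (zk (M j)) ⟨hyball, hzΓ (M j), hzB (M j)⟩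
      have hFyL : ‖F y - F (yk (M j))‖ ≤ (K:ℝ) * ‖y - yk (M j)‖ := by
        have h5 := hLρ.dist_le_mul y hyball (yk (M j)) hYball
        rw [dist_eq_norm, dist_eq_norm] at h5
        exact h5
      have expand1 : ((M j:ℝ)+1)/2 * ‖F y - zk (M j)‖^2 =
          ((M j:ℝ)+1)/2 * ‖F y - F (yk (M j))‖^2
          + ((M j:ℝ)+1) * ⟪F (yk (M j)) - zk (M j), F y - F (yk (M j))⟫
          + ((M j:ℝ)+1)/2 * ‖F (yk (M j)) - zk (M j)‖^2 := by
        rw [norm_sq_expand (F y) (F (yk (M j))) (zk (M j))]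
        ring
      have hκΛ : ⟪lam (M j), F y - F (yk (M j))⟫ =
          ((M j:ℝ)+1) * ⟪F (yk (M j)) - zk (M j), F y - F (yk (M j))⟫ := by
        rw [hlamdef]
        exact real_inner_smul_left _ _ _
      have hlin : φb y - φb (yk (M j)) = ⟪lam (M j), F y - F (yk (M j))⟫
          + ⟪lamb - lam (M j), F y - F (yk (M j))⟫ := by
        simp only [hφbdef]
        simp only [inner_sub_left, inner_sub_right]
        try ring
      have hpert : -(εL j * ‖y - yk (M j)‖) ≤ ⟪lamb - lam (M j), F y - F (yk (M j))⟫ := by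
        have h1 := abs_real_inner_le_norm (lamb - lam (M j)) (F y - F (yk (M j)))
        have h2 : ‖lamb - lam (M j)‖ * ‖F y - F (yk (M j))‖ ≤
            ‖lamb - lam (M j)‖ * ((K:ℝ) * ‖y - yk (M j)‖) :=
          mul_le_mul_of_nonneg_left hFyL (norm_nonneg _)
        have h3 := neg_abs_le ⟪lamb - lam (M j), F y - F (yk (M j))⟫
        have h5 : εL j * ‖y - yk (M j)‖ =
            ‖lamb - lam (M j)‖ * ((K:ℝ) * ‖y - yk (M j)‖) := by
          simp only [hεdef]; ring
        linarith
      have hquad : ((M j:ℝ)+1)/2 * ‖F y - F (yk (M j))‖^2 ≤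
          ((M j:ℝ)+1) * (K:ℝ)^2/2 * ‖y - yk (M j)‖^2 := by
        have hsq : ‖F y - F (yk (M j))‖^2 ≤ ((K:ℝ) * ‖y - yk (M j)‖)^2 := by
          have h0 := norm_nonneg (F y - F (yk (M j)))
          nlinarith [hFyL]
        have h7 : ((M j:ℝ)+1)/2 * ‖F y - F (yk (M j))‖^2 ≤
            ((M j:ℝ)+1)/2 * (((K:ℝ) * ‖y - yk (M j)‖)^2) :=
          mul_le_mul_of_nonneg_left hsq (by positivity)
        have h8 : ((M j:ℝ)+1)/2 * (((K:ℝ) * ‖y - yk (M j)‖)^2) =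
            ((M j:ℝ)+1) * (K:ℝ)^2/2 * ‖y - yk (M j)‖^2 := by ring
        linarith only [h7, h8]
      have haaq : aa j * ‖y - yk (M j)‖^2 =
          ((M j:ℝ)+1) * (K:ℝ)^2/2 * ‖y - yk (M j)‖^2 + ‖y - yk (M j)‖^2 := by
        simp only [haadef]; ring
      have hxexp : ‖y - x‖^2 = ‖y - yk (M j)‖^2 + 2*⟪yk (M j) - x, y - yk (M j)⟫
          + ‖yk (M j) - x‖^2 := norm_sq_expand y (yk (M j)) x
      have hfexp : f y ≤ f (yk (M j)) + ⟪gradient f (yk (M j)), y - yk (M j)⟫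
          + σ j * ‖y - yk (M j)‖ := by
        have h1 := (abs_le.1 (hrf j y hyr)).2
        linarith
      have hξeq : ⟪ξ j, y - yk (M j)⟫ = -⟪gradient f (yk (M j)), y - yk (M j)⟫
          - 2*⟪yk (M j) - x, y - yk (M j)⟫ := by
        simp only [hξdef]
        simp only [inner_sub_left, inner_neg_left, real_inner_smul_left]
        try ring
      have hBs : B j * ‖y - yk (M j)‖ = εL j * ‖y - yk (M j)‖ + σ j * ‖y - yk (M j)‖ := by
        simp only [hBdef]; ring
      exact KI_arith h4 expand1 hκΛ hlin hpert hquad haaq hxexp hfexp hξeq hBs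
    -- minimization of the shifted function
    set AA : ℕ → ℝ := fun j => aa j + 2*B j/r j with hAAdef
    have hAA0 : ∀ j, 0 < AA j := fun j => by
      have h1 := haa0 j
      have h2 : 0 < 2*B j/r j := by
        have := hB0 j; have := hr0 j; positivity
      show 0 < aa j + 2*B j/r j
      exact add_pos h1 h2
    have hsel3 : ∀ j : ℕ, ∃ w, ‖w - yk (M j)‖ ≤ r j ∧ ∀ y, ‖y - yk (M j)‖ ≤ r j →
        φb w - ⟪ξ j, w - yk (M j)⟫ + AA j * ‖w - yk (M j)‖^2 ≤
        φb y - ⟪ξ j, y - yk (M j)⟫ + AA j * ‖y - yk (M j)‖^2 := by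
      intro j
      have hcont : Continuous (fun y => φb y - ⟪ξ j, y - yk (M j)⟫
          + AA j * ‖y - yk (M j)‖^2) := by
        refine Continuous.add (Continuous.sub hφbc ?_) ?_
        · exact continuous_const.inner (continuous_id.sub continuous_const)
        · exact continuous_const.mul (((continuous_id.sub continuous_const).norm).pow 2)
      obtain ⟨w, hwmem, hwmin⟩ := (isCompact_closedBall (yk (M j)) (r j)).exists_isMinOn
        ⟨yk (M j), mem_closedBall_self (hr0 j).le⟩ hcont.continuousOn
      refine ⟨w, by rw [← dist_eq_norm]; exact hwmem, fun y hy => ?_⟩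
      exact hwmin (by rw [mem_closedBall, dist_eq_norm]; exact hy)
    choose w hwB hwmin using hsel3
    have hwlt : ∀ j : ℕ, ‖w j - yk (M j)‖ < r j := by
      intro j
      rcases lt_or_eq_of_le (hwB j) with h | h
      · exact h
      · exfalso
        have h1 := hwmin j (yk (M j))
          (by rw [sub_self, norm_zero]; exact (hr0 j).le)
        rw [sub_self, inner_zero_right, norm_zero] at h1
        have h1' : φb (w j) - ⟪ξ j, w j - yk (M j)⟫ + AA j * ‖w j - yk (M j)‖^2 ≤
            φb (yk (M j)) := by
          have he : (0:ℝ)^2 = 0 := by norm_num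
          rw [he, mul_zero, add_zero, sub_zero] at h1
          exact h1
        have h2 := KI j (w j) (hwB j)
        rw [h] at h2
        rw [h] at h1'
        have h3 : (AA j) * r j^2 - aa j * r j^2 = 2 * (B j * r j) := by
          show (aa j + 2*B j/r j) * r j^2 - aa j * r j^2 = 2 * (B j * r j)
          have hrne : r j ≠ 0 := ne_of_gt (hr0 j)
          field_simp
          ring
        have h4 : 0 < B j * r j := mul_pos (hB0 j) (hr0 j)
        exact hwlt_arith h2 h1' h3 h4
    set ξ' : ℕ → Eu n := fun j => ξ j - (2*AA j) • (w j - yk (M j)) with hξ'def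
    have hprox : ∀ j : ℕ, ∀ y, ‖y - w j‖ ≤ r j - ‖w j - yk (M j)‖ →
        φb (w j) + ⟪ξ' j, y - w j⟫ - AA j * ‖y - w j‖^2 ≤ φb y := by
      intro j y hyw
      have hyY : ‖y - yk (M j)‖ ≤ r j := by
        have h1 : y - yk (M j) = (y - w j) + (w j - yk (M j)) := by abel
        calc ‖y - yk (M j)‖ ≤ ‖y - w j‖ + ‖w j - yk (M j)‖ := by
              rw [h1]; exact norm_add_le _ _
          _ ≤ r j := by linarith
      have h1 := hwmin j y hyY
      have hi1 : ⟪ξ j, y - yk (M j)⟫ - ⟪ξ j, w j - yk (M j)⟫ = ⟪ξ j, y - w j⟫ := by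
        rw [← inner_sub_right]
        congr 1
        abel
      have hi2 : ‖y - yk (M j)‖^2 = ‖y - w j‖^2 + 2*⟪w j - yk (M j), y - w j⟫
          + ‖w j - yk (M j)‖^2 := norm_sq_expand y (w j) (yk (M j))
      have hi2' : AA j * ‖y - yk (M j)‖^2 = AA j * ‖y - w j‖^2
          + 2*AA j*⟪w j - yk (M j), y - w j⟫ + AA j * ‖w j - yk (M j)‖^2 := by
        rw [hi2]; ring
      have hi3 : ⟪ξ' j, y - w j⟫ = ⟪ξ j, y - w j⟫
          - 2*AA j*⟪w j - yk (M j), y - w j⟫ := by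
        simp only [hξ'def]
        simp only [inner_sub_left, real_inner_smul_left]
        try ring
      exact prox_arith h1 hi1 hi2' hi3
    have hregs : ∀ j : ℕ, pl2 (ξ' j) (-1) ∈ regNormal (epigraphSet φb) (pl2 (w j) (φb (w j))) := by
      intro j
      refine prox_regNormal (a := AA j) (sub_pos.2 (hwlt j)) ?_
      intro y hy
      have := hprox j y hy
      linarith
    -- limits
    have hrj1 : ∀ j : ℕ, r j ≤ 1/((j:ℝ)+1) := by
      intro j
      refine le_trans (hrb j) ?_
      rw [div_le_div_iff₀ (by positivity) (by positivity)]
      have h1 : ((j:ℝ)+1) * 1 ≤ ((j:ℝ)+1) * aa j :=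
        mul_le_mul_of_nonneg_left (haa1 j) (by positivity)
      nlinarith
    have hr0' : Tendsto r atTop (𝓝 0) := by
      refine squeeze_zero (fun j => (hr0 j).le) hrj1
        tendsto_one_div_add_atTop_nhds_zero_nat
    have hwto : Tendsto w atTop (𝓝 x) := by
      rw [← tendsto_sub_nhds_zero_iff]
      refine squeeze_zero_norm' (a := fun j => r j + ‖yk (M j) - x‖) ?_ ?_
      · refine Eventually.of_forall (fun j => ?_)
        have h1 : w j - x = (w j - yk (M j)) + (yk (M j) - x) := by abel
        calc ‖w j - x‖ ≤ ‖w j - yk (M j)‖ + ‖yk (M j) - x‖ := by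
              rw [h1]; exact norm_add_le _ _
          _ ≤ r j + ‖yk (M j) - x‖ := by linarith [hwB j]
      · have h2 : Tendsto (fun j => ‖yk (M j) - x‖) atTop (𝓝 0) := by
          have := (tendsto_sub_nhds_zero_iff.2 hyM).norm
          simpa using this
        simpa using hr0'.add h2
    have hξto : Tendsto ξ atTop (𝓝 (-gradient f x)) := by
      have h1 : Tendsto (fun j => gradient f (yk (M j))) atTop (𝓝 (gradient f x)) :=
        (hgc.tendsto x).comp hyM
      have h2 : Tendsto (fun j => (2:ℝ) • (yk (M j) - x)) atTop (𝓝 (0 : Eu n)) := by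
        have h3 := tendsto_sub_nhds_zero_iff.2 hyM
        simpa using h3.const_smul (2:ℝ)
      have h4 := h1.neg.sub h2
      simp only [sub_zero] at h4
      exact h4
    have hBto : Tendsto B atTop (𝓝 0) := by
      have h1 : Tendsto εL atTop (𝓝 0) := by
        have h2 : Tendsto (fun j => lamb - lam (M j)) atTop (𝓝 (0:Eu l)) := by
          have := (tendsto_const_nhds (x := lamb)).sub hlM
          simpa using this
        have h3 := h2.norm.const_mul (K:ℝ)
        simp only [norm_zero, mul_zero] at h3
        exact h3
      have h4 : Tendsto σ atTop (𝓝 0) := tendsto_one_div_add_atTop_nhds_zero_nat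
      have h5 := h1.add h4
      simpa using h5
    have haar : ∀ j : ℕ, aa j * r j ≤ 1/((j:ℝ)+1) := by
      intro j
      have h1 : aa j * r j ≤ aa j * (1/(((j:ℝ)+1)*(aa j))) :=
        mul_le_mul_of_nonneg_left (hrb j) (haa0 j).le
      have h2 : aa j * (1/(((j:ℝ)+1)*(aa j))) = 1/((j:ℝ)+1) := by
        field_simp
        exact mul_inv_cancel₀ (haa0 j).ne'
      linarith
    have hcorr : Tendsto (fun j => (2*AA j) • (w j - yk (M j))) atTop (𝓝 (0:Eu n)) := by
      refine squeeze_zero_norm' (a := fun j : ℕ => 2*(1/((j:ℝ)+1)) + 4*B j) ?_ ?_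
      · refine Eventually.of_forall (fun j => ?_)
        have h1 : ‖(2*AA j) • (w j - yk (M j))‖ = 2*AA j * ‖w j - yk (M j)‖ := by
          rw [norm_smul, Real.norm_eq_abs, abs_of_pos (by linarith [hAA0 j])]
        rw [h1]
        have h2 : 2*AA j * ‖w j - yk (M j)‖ ≤ 2*AA j * r j := by
          apply mul_le_mul_of_nonneg_left (hwB j)
          linarith [hAA0 j]
        have h3 : 2*AA j * r j = 2*(aa j * r j) + 4*B j := by
          show 2*(aa j + 2*B j/r j) * r j = 2*(aa j * r j) + 4*B j
          have hrne : r j ≠ 0 := ne_of_gt (hr0 j)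
          field_simp
          ring
        have h4 := haar j
        exact corr_arith h2 h3 h4
      · have h1 : Tendsto (fun j : ℕ => 2*(1/((j:ℝ)+1))) atTop (𝓝 0) := by
          have h0 := tendsto_one_div_add_atTop_nhds_zero_nat.const_mul (2:ℝ)
          simpa using h0
        have h2 := hBto.const_mul (4:ℝ)
        simp only [mul_zero] at h2
        simpa using h1.add h2
    have hξ'to : Tendsto ξ' atTop (𝓝 (-gradient f x)) := by
      have h1 := hξto.sub hcorr
      simp only [sub_zero] at h1
      exact h1
    exact ⟨lamb, limSubdiff_of_seq hφbc w ξ' hwto hξ'to hregs, hlimN⟩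

  · -- Case B : multipliers blow up; contradiction with trivial critical cone
    push_neg at hbd
    have hUnb : ∀ C : ℝ, ∀ᶠ k in atTop, C < ‖lam k‖ := by
      intro C
      have := hbd C
      exact this
    obtain ⟨φu, hφu, hφuP⟩ := Filter.extraction_forall_of_eventually
      (P := fun nn k => (nn:ℝ) + 1 < ‖lam k‖) (fun nn => hUnb ((nn:ℝ)+1))
    have hlpos : ∀ j, (0:ℝ) < ‖lam (φu j)‖ := fun j =>
      lt_trans (by positivity) (hφuP j)
    have hyne : ∀ j, yk (φu j) ≠ x := by
      intro j hcontr
      have h0 := hm5 (φu j) hcontr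
      have h1 := hlpos j
      rw [h0] at h1
      simpa using h1
    have hlinf : Tendsto (fun j => ‖lam (φu j)‖) atTop atTop := by
      apply tendsto_atTop_mono (fun j => (hφuP j).le)
      apply tendsto_atTop_add_const_right
      exact tendsto_natCast_atTop_atTop
    have hquot : Tendsto (fun j => ‖yk (φu j) - x‖⁻¹ • (zk (φu j) - F (yk (φu j))))
        atTop (𝓝 0) := by
      apply squeeze_zero_norm' (a := fun j => 2*C₁/‖lam (φu j)‖)
      · refine Eventually.of_forall (fun j => ?_)
        set k := φu j
        have htpos : (0:ℝ) < ‖yk k - x‖ := norm_sub_pos_iff.2 (hyne j)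
        have hκ : (0:ℝ) < (k:ℝ)+1 := by positivity
        have hA : ‖lam k‖ = ((k:ℝ)+1) * ‖F (yk k) - zk k‖ := by
          rw [hlamdef]
          show ‖((k:ℝ)+1) • (F (yk k) - zk k)‖ = _
          rw [norm_smul, Real.norm_eq_abs, abs_of_pos hκ]
        have hineq : ((k:ℝ)+1)/2 * ‖F (yk k) - zk k‖^2 ≤ C₁ * ‖yk k - x‖ := by
          have h := hm1 k
          have h3 := hflip _ (hyB k)
          rw [Real.norm_eq_abs] at h3
          have h6 : f x - f (yk k) ≤ |f (yk k) - f x| := by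
            rw [abs_sub_comm]; exact le_abs_self _
          have h8 : 0 ≤ ‖yk k - x‖^2 := by positivity
          linarith
        have hnval : ‖‖yk k - x‖⁻¹ • (zk k - F (yk k))‖ =
            ‖F (yk k) - zk k‖ / ‖yk k - x‖ := by
          rw [norm_smul, Real.norm_eq_abs, abs_of_pos (inv_pos.2 htpos),
            div_eq_inv_mul, norm_sub_rev (zk k) (F (yk k))]
        rw [hnval]
        rw [div_le_div_iff₀ htpos (hlpos j)]
        calc ‖F (yk k) - zk k‖ * ‖lam k‖
            = ((k:ℝ)+1) * ‖F (yk k) - zk k‖^2 := by rw [hA]; ring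
          _ ≤ 2 * (C₁ * ‖yk k - x‖) := by linarith
          _ = 2*C₁ * ‖yk k - x‖ := by ring
      · have h1 := hlinf.inv_tendsto_atTop
        have h2 := h1.const_mul (2*C₁)
        simp only [mul_zero] at h2
        simpa [div_eq_mul_inv] using h2
    exact absurd (no_crit ((hdf x).hasGradientAt) hF' hρ₁ hLρ hfeas hC
      (fun j => yk (φu j)) (fun j => zk (φu j)) hyne
      (hyto.comp hφu.tendsto_atTop) (fun j => hfle_all (φu j))
      (fun j => hzΓ (φu j)) hquot) (fun h => h)

end
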